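/- For every vertex v ∈ V, the sum of the total frequencies F(e) over the n−1 edges e incident to v equals (i−1)²·C(n−1,i−1). Equivalently, the sum over the n−1 edges incident to v of the probabilities p_i(e) equals 2(n−1)/i. -/

import Mathlib

open Finset

/-- The length of a path, given as a list of vertices, with respect to the
distance function `d`: the sum of `d` over consecutive entries. -/
def pathLen {V : Type*} (d : V → V → ℝ) (P : List V) : ℝ :=
  ((P.zip P.tail).map fun p => d p.1 p.2).sum

/-- A path (list of vertices) contains the edge `{x, y}` iff `x` and `y`
occur consecutively in it (in either order). -/
def ContainsEdge {V : Type*} (P : List V) (x y : V) : Prop :=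
  [x, y] <:+: P ∨ [y, x] <:+: P

/-- A Hamiltonian path of the whole (finite) vertex type `V` from `u` to `v`:
a duplicate-free list of all vertices starting at `u` and ending at `v`. -/
def IsHamPath {V : Type*} (P : List V) (u v : V) : Prop :=
  P.Nodup ∧ (∀ x : V, x ∈ P) ∧ P.head? = some u ∧ P.getLast? = some v

/-- A Hamiltonian path of the vertex subset `S` from `u` to `v`: a
duplicate-free list of exactly the vertices of `S` starting at `u` and ending
at `v`. -/
def IsHamPathOn {V : Type*} (S : Finset V) (P : List V) (u v : V) : Prop :=
  P.Nodup ∧ (∀ x : V, x ∈ P ↔ x ∈ S) ∧ P.head? = some u ∧ P.getLast? = some v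

/-- The frequency of the edge `e` in the (frequency) subgraph on `S`: the number
of unordered pairs `{u, v}` of distinct vertices of `S` whose optimal path
`OP S u v` contains `e`. -/
noncomputable def freqOn {V : Type*} (OP : Finset V → V → V → List V) (S : Finset V)
    (e : Sym2 V) : ℕ :=
  Nat.card {p : Sym2 V // ¬ p.IsDiag ∧
    ∃ u v : V, p = s(u, v) ∧ u ∈ S ∧ v ∈ S ∧
      ∃ x y : V, e = s(x, y) ∧ ContainsEdge (OP S u v) x y}

/-- The total frequency `F(e)` of the edge `e`: the sum of its frequencies over
all `i`-element vertex subsets containing (both endpoints of) `e`. -/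
noncomputable def totalFreq {V : Type*} [Fintype V] [DecidableEq V]
    (OP : Finset V → V → V → List V) (i : ℕ) (e : Sym2 V) : ℕ :=
  ∑ S ∈ (Finset.univ.powersetCard i).filter (fun S => e ∈ S.sym2), freqOn OP S e

section aux
variable {V : Type*} [DecidableEq V]
attribute [local instance] Classical.propDecidable

lemma nodup_append_cons_inj {A B C D : List V} {v : V}
    (h : (A ++ v :: B).Nodup) (heq : A ++ v :: B = C ++ v :: D) : A = C ∧ B = D := by
  have hvA : v ∉ A := by
    rw [List.nodup_append] at h
    intro hmem; exact h.2.2 v hmem v (by simp) rfl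
  have hvC : v ∉ C := by
    rw [heq, List.nodup_append] at h
    intro hmem; exact h.2.2 v hmem v (by simp) rfl
  have hlen : A.length = C.length := by
    have h1 : List.idxOf v (A ++ v :: B) = A.length := by
      rw [List.idxOf_append_of_notMem hvA, List.idxOf_cons_self, Nat.add_zero]
    have h2 : List.idxOf v (C ++ v :: D) = C.length := by
      rw [List.idxOf_append_of_notMem hvC, List.idxOf_cons_self, Nat.add_zero]
    rw [heq, h2] at h1; omega
  obtain ⟨h1, h2⟩ := List.append_inj heq hlen
  exact ⟨h1, by simpa using h2⟩

lemma infix_pair_iff {A B : List V} {v u : V} (h : (A ++ v :: B).Nodup) :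
    [v, u] <:+: (A ++ v :: B) ↔ B.head? = some u := by
  constructor
  · rintro ⟨s, t, hst⟩
    have heq : A ++ v :: B = s ++ v :: (u :: t) := by rw [← hst]; simp
    obtain ⟨-, hB⟩ := nodup_append_cons_inj h heq
    rw [hB]; rfl
  · intro hB
    cases B with
    | nil => simp at hB
    | cons b B' =>
      simp only [List.head?_cons, Option.some.injEq] at hB
      exact ⟨A, B', by rw [← hB]; simp⟩

lemma infix_rev {V : Type*} {P : List V} {x y : V} : [x, y] <:+: P.reverse ↔ [y, x] <:+: P := by
  constructor <;> intro h <;> · have := h.reverse; simpa using this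

lemma infix_pair_iff' {A B : List V} {v u : V} (h : (A ++ v :: B).Nodup) :
    [u, v] <:+: (A ++ v :: B) ↔ A.getLast? = some u := by
  have hrev : (B.reverse ++ v :: A.reverse).Nodup := by
    have : (A ++ v :: B).reverse.Nodup := List.nodup_reverse.mpr h
    simpa using this
  have h1 : [u, v] <:+: (A ++ v :: B) ↔ [v, u] <:+: (A ++ v :: B).reverse := (infix_rev).symm
  have h2 : (A ++ v :: B).reverse = B.reverse ++ v :: A.reverse := by simp
  rw [h1, h2, infix_pair_iff hrev, List.head?_reverse]

lemma neighbors_eq [Fintype V] {A B : List V} {v : V} (h : (A ++ v :: B).Nodup) :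
    (univ.filter (fun u => ContainsEdge (A ++ v :: B) v u))
      = B.head?.toFinset ∪ A.getLast?.toFinset := by
  ext u
  simp only [mem_filter, mem_univ, true_and, ContainsEdge, mem_union, Option.mem_toFinset,
    infix_pair_iff h, infix_pair_iff' h]
  tauto

lemma deg_count [Fintype V] {P : List V} {v : V} (h : P.Nodup) (hv : v ∈ P)
    (hlen : 2 ≤ P.length) :
    (univ.filter (fun u => ContainsEdge P v u)).card
      = if P.head? = some v ∨ P.getLast? = some v then 1 else 2 := by
  obtain ⟨A, B, rfl⟩ := List.append_of_mem hv
  rw [neighbors_eq h]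
  have hvA : v ∉ A := by
    rw [List.nodup_append] at h
    intro hmem; exact h.2.2 v hmem v (by simp) rfl
  have hvB : v ∉ B := by
    rw [List.nodup_append] at h
    have := h.2.1
    rw [List.nodup_cons] at this
    exact this.1
  match A, B with
  | [], [] => simp at hlen
  | [], b :: B' =>
    have : ((List.nil : List V) ++ v :: b :: B').head? = some v := rfl
    simp [this]
  | a :: A', [] =>
    have hgl : ((a :: A') ++ v :: ([] : List V)).getLast? = some v := by
      rw [List.getLast?_append_cons]; rfl
    rw [if_pos (Or.inr hgl)]
    have hLast : (a :: A').getLast? = some ((a :: A').getLast (by simp)) :=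
      List.getLast?_eq_getLast (by simp)
    rw [hLast]
    simp
  | a :: A', b :: B' =>
    have hh : ((a :: A') ++ v :: b :: B').head? = some a := rfl
    have hgl : ((a :: A') ++ v :: b :: B').getLast? = (v :: b :: B').getLast? := by
      rw [List.getLast?_append_cons]
    have hglv : (v :: b :: B').getLast? = (b :: B').getLast? := by
      rw [List.getLast?_cons_cons]
    have hane : a ≠ v := fun hav => hvA (by simp [hav.symm])
    have hlast_mem : (b :: B').getLast (by simp) ∈ b :: B' := List.getLast_mem _
    have hglne : ((a :: A') ++ v :: b :: B').getLast? ≠ some v := by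
      rw [hgl, hglv, List.getLast?_eq_getLast (by simp)]
      intro hc
      exact hvB (Option.some_inj.mp hc ▸ hlast_mem)
    have hcond : ¬(((a :: A') ++ v :: b :: B').head? = some v ∨
        ((a :: A') ++ v :: b :: B').getLast? = some v) := by
      rw [hh]
      push_neg
      exact ⟨fun hc => hane (Option.some_inj.mp hc), hglne⟩
    rw [if_neg hcond]
    have hHead : (b :: B').head? = some b := rfl
    have hLast : (a :: A').getLast? = some ((a :: A').getLast (by simp)) :=
      List.getLast?_eq_getLast (by simp)
    rw [hHead, hLast]
    have hne : b ≠ (a :: A').getLast (by simp) := by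
      intro hc
      rw [List.nodup_append] at h
      exact h.2.2 b (hc ▸ List.getLast_mem _) b (by simp) rfl
    have hdisj : Disjoint (({b} : Finset V)) {(a :: A').getLast (by simp)} := by
      rw [Finset.disjoint_singleton_left, Finset.mem_singleton]
      exact hne
    rw [Option.toFinset_some, Option.toFinset_some, Finset.card_union_of_disjoint hdisj,
      Finset.card_singleton, Finset.card_singleton]

lemma containsEdge_symm {V : Type*} {P : List V} {x y : V} :
    ContainsEdge P x y ↔ ContainsEdge P y x := by
  unfold ContainsEdge; exact or_comm

lemma containsEdge_reverse {V : Type*} {P : List V} {x y : V} :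
    ContainsEdge P.reverse x y ↔ ContainsEdge P x y := by
  unfold ContainsEdge
  constructor
  · rintro (h | h)
    · right
      have := h.reverse; simpa using this
    · left
      have := h.reverse; simpa using this
  · rintro (h | h)
    · right
      have := h.reverse; simpa using this
    · left
      have := h.reverse; simpa using this

lemma containsEdge_mem {V : Type*} {P : List V} {x y : V} (h : ContainsEdge P x y) : y ∈ P := by
  rcases h with h | h
  · exact h.subset (by simp)
  · exact h.subset (by simp)

lemma containsEdge_ne {V : Type*} {P : List V} (h : P.Nodup) {x y : V}
    (hce : ContainsEdge P x y) : x ≠ y := by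
  rintro rfl
  rcases hce with hc | hc <;>
  · have := hc.sublist.nodup h
    simp at this



lemma freqOn_eq [Fintype V] (OP : Finset V → V → V → List V) (S : Finset V) (e : Sym2 V) :
    freqOn OP S e = (univ.filter (fun p : Sym2 V => ¬ p.IsDiag ∧
      ∃ u v : V, p = s(u, v) ∧ u ∈ S ∧ v ∈ S ∧
        ∃ x y : V, e = s(x, y) ∧ ContainsEdge (OP S u v) x y)).card := by
  rw [freqOn, Nat.card_eq_fintype_card, Fintype.card_subtype]

lemma per_p [Fintype V] (OP : Finset V → V → V → List V) (S : Finset V) (i : ℕ)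
    (hS : S.card = i) (hi : 4 ≤ i) (v : V) (hv : v ∈ S)
    (hOP : ∀ u w : V, u ∈ S → w ∈ S → u ≠ w → IsHamPathOn S (OP S u w) u w)
    (hOPsymm : ∀ (u w : V), OP S w u = (OP S u w).reverse) (p : Sym2 V) :
    ((S.erase v).filter (fun u => ¬ p.IsDiag ∧
      ∃ a b : V, p = s(a, b) ∧ a ∈ S ∧ b ∈ S ∧
        ∃ x y : V, s(v, u) = s(x, y) ∧ ContainsEdge (OP S a b) x y)).card
      = if p ∈ S.sym2.filter (fun q => ¬ q.IsDiag) then (if v ∈ p then 1 else 2) else 0 := by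
  by_cases hp : p ∈ S.sym2.filter (fun q => ¬ q.IsDiag)
  · rw [if_pos hp]
    induction p using Sym2.ind with
    | _ a b =>
    rw [mem_filter, Finset.mk_mem_sym2_iff] at hp
    obtain ⟨⟨ha, hb⟩, hnd⟩ := hp
    have hab : a ≠ b := by
      intro h; exact hnd (by simp [h])
    obtain ⟨hPnd, hPmem, hPhd, hPlast⟩ := hOP a b ha hb hab
    set P := OP S a b with hPdef
    have hQ : ∀ u : V, (¬ (s(a, b) : Sym2 V).IsDiag ∧
        ∃ a' b' : V, (s(a, b) : Sym2 V) = s(a', b') ∧ a' ∈ S ∧ b' ∈ S ∧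
          ∃ x y : V, (s(v, u) : Sym2 V) = s(x, y) ∧ ContainsEdge (OP S a' b') x y)
        ↔ ContainsEdge P v u := by
      intro u
      constructor
      · rintro ⟨-, a', b', hpab, ha', hb', x, y, hxy, hce⟩
        rw [Sym2.eq_iff] at hpab hxy
        have hce2 : ContainsEdge (OP S a' b') v u := by
          rcases hxy with ⟨rfl, rfl⟩ | ⟨rfl, rfl⟩
          · exact hce
          · exact containsEdge_symm.mpr hce
        rcases hpab with ⟨rfl, rfl⟩ | ⟨rfl, rfl⟩
        · exact hce2
        · rw [hOPsymm] at hce2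
          exact containsEdge_reverse.mp hce2
      · intro hce
        exact ⟨hnd, a, b, rfl, ha, hb, v, u, rfl, hce⟩
    have hfilter : ((S.erase v).filter (fun u => ¬ (s(a, b) : Sym2 V).IsDiag ∧
        ∃ a' b' : V, (s(a, b) : Sym2 V) = s(a', b') ∧ a' ∈ S ∧ b' ∈ S ∧
          ∃ x y : V, (s(v, u) : Sym2 V) = s(x, y) ∧ ContainsEdge (OP S a' b') x y))
        = univ.filter (fun u => ContainsEdge P v u) := by
      ext u
      simp only [mem_filter, mem_univ, true_and, mem_erase]
      rw [hQ u]
      constructor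
      · exact And.right
      · intro hce
        refine ⟨⟨(containsEdge_ne hPnd hce).symm, (hPmem u).mp (containsEdge_mem hce)⟩, hce⟩
    rw [hfilter]
    have hvP : v ∈ P := (hPmem v).mpr hv
    have hlen : 2 ≤ P.length := by
      have htf : P.toFinset = S := by
        ext x; rw [List.mem_toFinset]; exact hPmem x
      have := List.toFinset_card_of_nodup hPnd
      rw [htf, hS] at this
      omega
    rw [deg_count hPnd hvP hlen]
    have hiff : (P.head? = some v ∨ P.getLast? = some v) ↔ v ∈ (s(a, b) : Sym2 V) := by
      rw [hPhd, hPlast, Sym2.mem_iff]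
      constructor
      · rintro (h | h) <;> [left; right] <;> exact (Option.some_inj.mp h).symm
      · rintro (rfl | rfl) <;> [left; right] <;> rfl
    rw [if_congr hiff rfl rfl]
  · rw [if_neg hp, Finset.card_eq_zero, Finset.filter_eq_empty_iff]
    rintro u - ⟨hnd, a, b, hpab, ha, hb, -⟩
    exact hp (mem_filter.mpr ⟨by rw [hpab]; exact Finset.mk_mem_sym2_iff.mpr ⟨ha, hb⟩, hnd⟩)

lemma card_diag_filter [Fintype V] (S : Finset V) :
    (S.sym2.filter (fun q : Sym2 V => q.IsDiag)).card = S.card := by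
  have himg : S.sym2.filter (fun q : Sym2 V => q.IsDiag) = S.image (fun a => (s(a, a) : Sym2 V)) := by
    ext p
    simp only [mem_filter, mem_image]
    constructor
    · rintro ⟨hmem, hdiag⟩
      induction p using Sym2.ind with
      | _ x y =>
      rw [Sym2.mk_isDiag_iff] at hdiag
      subst hdiag
      exact ⟨x, (Finset.mk_mem_sym2_iff.mp hmem).1, rfl⟩
    · rintro ⟨a, ha, rfl⟩
      exact ⟨Finset.mk_mem_sym2_iff.mpr ⟨ha, ha⟩, by simp [Sym2.mk_isDiag_iff]⟩
  rw [himg]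
  apply Finset.card_image_of_injOn
  intro a _ b _ hab
  rw [Sym2.eq_iff] at hab
  tauto

lemma card_Ev [Fintype V] (S : Finset V) (v : V) (hv : v ∈ S) :
    (((S.sym2.filter (fun q : Sym2 V => ¬ q.IsDiag)).filter (fun p => v ∈ p)).card) = S.card - 1 := by
  have himg : (S.sym2.filter (fun q : Sym2 V => ¬ q.IsDiag)).filter (fun p => v ∈ p)
      = (S.erase v).image (fun u => (s(v, u) : Sym2 V)) := by
    ext p
    simp only [mem_filter, mem_image, mem_erase]
    constructor
    · rintro ⟨⟨hmem, hnd⟩, hvp⟩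
      rw [Sym2.mem_iff_exists] at hvp
      obtain ⟨u, rfl⟩ := hvp
      have : u ∈ S := (Finset.mk_mem_sym2_iff.mp hmem).2
      refine ⟨u, ⟨?_, this⟩, rfl⟩
      intro h
      exact hnd (by simp [Sym2.mk_isDiag_iff, h])
    · rintro ⟨u, ⟨hune, huS⟩, rfl⟩
      refine ⟨⟨Finset.mk_mem_sym2_iff.mpr ⟨hv, huS⟩, ?_⟩, by simp⟩
      rw [Sym2.mk_isDiag_iff]
      exact fun h => hune h.symm
  rw [himg, Finset.card_image_of_injOn, Finset.card_erase_of_mem hv]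
  intro u1 h1 u2 h2 heq
  rw [Sym2.eq_iff] at heq
  rcases heq with ⟨-, h⟩ | ⟨h, h'⟩
  · exact h
  · exact h'.trans h

lemma innerSum [Fintype V] (OP : Finset V → V → V → List V) (S : Finset V) (i : ℕ)
    (hS : S.card = i) (hi : 4 ≤ i) (v : V) (hv : v ∈ S)
    (hOP : ∀ u w : V, u ∈ S → w ∈ S → u ≠ w → IsHamPathOn S (OP S u w) u w)
    (hOPsymm : ∀ (u w : V), OP S w u = (OP S u w).reverse) :
    (∑ u ∈ S.erase v, freqOn OP S s(v, u)) = (i - 1) ^ 2 := by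
  have step1 : (∑ u ∈ S.erase v, freqOn OP S s(v, u))
      = ∑ p ∈ (univ : Finset (Sym2 V)), ((S.erase v).filter (fun u => ¬ p.IsDiag ∧
          ∃ a b : V, p = s(a, b) ∧ a ∈ S ∧ b ∈ S ∧
            ∃ x y : V, (s(v, u) : Sym2 V) = s(x, y) ∧ ContainsEdge (OP S a b) x y)).card := by
    simp only [freqOn_eq, Finset.card_filter]
    rw [Finset.sum_comm]
  rw [step1]
  have step2 : ∀ p ∈ (univ : Finset (Sym2 V)), ((S.erase v).filter (fun u => ¬ p.IsDiag ∧
          ∃ a b : V, p = s(a, b) ∧ a ∈ S ∧ b ∈ S ∧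
            ∃ x y : V, (s(v, u) : Sym2 V) = s(x, y) ∧ ContainsEdge (OP S a b) x y)).card
      = if p ∈ S.sym2.filter (fun q => ¬ q.IsDiag) then (if v ∈ p then 1 else 2) else 0 :=
    fun p _ => per_p OP S i hS hi v hv hOP hOPsymm p
  rw [Finset.sum_congr rfl step2]
  rw [Finset.sum_ite_mem]
  have huniv : (univ : Finset (Sym2 V)) ∩ (S.sym2.filter (fun q => ¬ q.IsDiag))
      = S.sym2.filter (fun q => ¬ q.IsDiag) := by
    rw [Finset.univ_inter]
  rw [huniv]
  set E := S.sym2.filter (fun q : Sym2 V => ¬ q.IsDiag) with hE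
  rw [← Finset.sum_filter_add_sum_filter_not E (fun p => v ∈ p)]
  have e1 : (∑ p ∈ E.filter (fun p => v ∈ p), (if v ∈ p then 1 else 2))
      = (E.filter (fun p => v ∈ p)).card := by
    rw [Finset.sum_congr rfl (fun p hp => if_pos (mem_filter.mp hp).2), Finset.sum_const,
      smul_eq_mul, mul_one]
  have e2 : (∑ p ∈ E.filter (fun p => ¬ v ∈ p), (if v ∈ p then 1 else 2))
      = 2 * (E.filter (fun p => ¬ v ∈ p)).card := by
    rw [Finset.sum_congr rfl (fun p hp => if_neg (mem_filter.mp hp).2), Finset.sum_const,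
      smul_eq_mul, mul_comm]
  rw [e1, e2]
  have hcEv : (E.filter (fun p => v ∈ p)).card = i - 1 := by
    rw [hE, card_Ev S v hv, hS]
  have hcEnot : (E.filter (fun p => ¬ v ∈ p)).card = E.card - (i - 1) := by
    have := Finset.card_filter_add_card_filter_not (s := E) (p := fun p => v ∈ p)
    omega
  have hcE : E.card = i.choose 2 := by
    have hpart := Finset.card_filter_add_card_filter_not
      (s := S.sym2) (p := fun q : Sym2 V => q.IsDiag)
    rw [card_diag_filter, Finset.card_sym2, hS] at hpart
    have hch : (i + 1).choose 2 = i + i.choose 2 := by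
      rw [Nat.choose_succ_succ, Nat.choose_one_right]
    rw [hch] at hpart
    simp only [hE]
    omega
  rw [hcEv, hcEnot, hcE]
  -- arithmetic
  obtain ⟨m, rfl⟩ : ∃ m, i = m + 1 := ⟨i - 1, by omega⟩
  simp only [Nat.add_sub_cancel]
  have hdvd : 2 ∣ (m + 1) * m := by
    have := (Nat.even_mul_succ_self m).two_dvd
    rwa [mul_comm] at this
  have h2c : 2 * (m + 1).choose 2 = (m + 1) * m := by
    rw [Nat.choose_two_right, Nat.add_sub_cancel, Nat.mul_div_cancel' hdvd]
  have hmul : (m + 1) * m = m * m + m := by ring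
  have hsq : m ^ 2 = m * m := sq m
  have hq : m ≤ m * m := Nat.le_mul_of_pos_left m (by omega)
  set c := (m + 1).choose 2
  omega

lemma card_containing [Fintype V] (v : V) (i n : ℕ) (hi : 1 ≤ i) (hin : i ≤ n)
    (hcard : Fintype.card V = n) :
    ((univ.powersetCard i).filter (fun S : Finset V => v ∈ S)).card
      = (n - 1).choose (i - 1) := by
  have hbij : ((univ.powersetCard i).filter (fun S : Finset V => v ∈ S)).card
      = ((univ.erase v).powersetCard (i - 1)).card := by
    refine Finset.card_bij' (fun S _ => S.erase v) (fun T _ => insert v T) ?_ ?_ ?_ ?_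
    · intro S hS
      rw [mem_filter, Finset.mem_powersetCard_univ] at hS
      rw [Finset.mem_powersetCard]
      exact ⟨fun x hx => Finset.mem_erase.mpr
        ⟨(Finset.mem_erase.mp hx).1, Finset.mem_univ x⟩,
        by rw [Finset.card_erase_of_mem hS.2, hS.1]⟩
    · intro T hT
      rw [Finset.mem_powersetCard] at hT
      have hvT : v ∉ T := fun h => (Finset.mem_erase.mp (hT.1 h)).1 rfl
      rw [mem_filter, Finset.mem_powersetCard_univ]
      exact ⟨by rw [Finset.card_insert_of_notMem hvT, hT.2]; omega,
        Finset.mem_insert_self v T⟩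
    · intro S hS
      simp only [mem_filter, Finset.mem_powersetCard_univ] at hS
      exact Finset.insert_erase hS.2
    · intro T hT
      simp only [Finset.mem_powersetCard] at hT
      have hvT : v ∉ T := fun h => (Finset.mem_erase.mp (hT.1 h)).1 rfl
      exact Finset.erase_insert hvT
  rw [hbij, Finset.card_powersetCard, Finset.card_erase_of_mem (Finset.mem_univ v),
    Finset.card_univ, hcard]

end aux

/-- For every vertex `v`, the total frequencies of the `n - 1`
edges incident to `v` sum to `(i-1)² · C(n-1, i-1)`; equivalently, the
probabilities of these edges sum to `2(n-1)/i`. -/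
theorem stmt13 {V : Type*} [Fintype V] [DecidableEq V] (n i : ℕ) (hi : 4 ≤ i) (hin : i ≤ n)
    (hcard : Fintype.card V = n)
    (d : V → V → ℝ) (hdsymm : ∀ u v : V, d u v = d v u)
    (hdpos : ∀ u v : V, u ≠ v → 0 < d u v)
    (OP : Finset V → V → V → List V)
    (hOP : ∀ S : Finset V, S.card = i → ∀ u v : V, u ∈ S → v ∈ S → u ≠ v →
      IsHamPathOn S (OP S u v) u v)
    (hOPmin : ∀ S : Finset V, S.card = i → ∀ u v : V, u ∈ S → v ∈ S → u ≠ v →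
      ∀ Q : List V, IsHamPathOn S Q u v → pathLen d (OP S u v) ≤ pathLen d Q)
    (hOPuniq : ∀ S : Finset V, S.card = i → ∀ u v : V, u ∈ S → v ∈ S → u ≠ v →
      ∀ Q : List V, IsHamPathOn S Q u v → pathLen d Q = pathLen d (OP S u v) →
        Q = OP S u v)
    (hOPsymm : ∀ (S : Finset V) (u v : V), OP S v u = (OP S u v).reverse) :
    ∀ v : V,
      (∑ u ∈ Finset.univ.erase v, totalFreq OP i s(v, u))
        = (i - 1) ^ 2 * (n - 1).choose (i - 1) ∧
      (∑ u ∈ Finset.univ.erase v,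
          (totalFreq OP i s(v, u) : ℚ) /
            (((i : ℚ) * ((i : ℚ) - 1) / 2) * ((n - 2).choose (i - 2) : ℚ)))
        = 2 * ((n : ℚ) - 1) / (i : ℚ) := by
  classical
  intro v
  have part1 : (∑ u ∈ Finset.univ.erase v, totalFreq OP i s(v, u))
      = (i - 1) ^ 2 * (n - 1).choose (i - 1) := by
    have step1 : (∑ u ∈ Finset.univ.erase v, totalFreq OP i s(v, u))
        = ∑ u ∈ Finset.univ.erase v, ∑ S ∈ Finset.univ.powersetCard i,
            (if s(v, u) ∈ S.sym2 then freqOn OP S s(v, u) else 0) := by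
      refine Finset.sum_congr rfl fun u _ => ?_
      rw [totalFreq, Finset.sum_filter]
    rw [step1, Finset.sum_comm]
    have step2 : ∀ S ∈ Finset.univ.powersetCard i,
        (∑ u ∈ Finset.univ.erase v, (if s(v, u) ∈ S.sym2 then freqOn OP S s(v, u) else 0))
        = if v ∈ S then (i - 1) ^ 2 else 0 := by
      intro S hSmem
      have hScard : S.card = i := Finset.mem_powersetCard_univ.mp hSmem
      by_cases hv : v ∈ S
      · rw [if_pos hv, ← Finset.sum_filter]
        have hfl : (Finset.univ.erase v).filter (fun u => s(v, u) ∈ S.sym2) = S.erase v := by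
          ext u
          simp only [Finset.mem_filter, Finset.mem_erase, Finset.mem_univ, and_true,
            Finset.mk_mem_sym2_iff, true_and]
          tauto
        rw [hfl]
        exact innerSum OP S i hScard hi v hv
          (fun u w hu hw huw => hOP S hScard u w hu hw huw) (hOPsymm S)
      · rw [if_neg hv]
        refine Finset.sum_eq_zero fun u _ => ?_
        rw [if_neg]
        intro hmem
        exact hv (Finset.mk_mem_sym2_iff.mp hmem).1
    rw [Finset.sum_congr rfl step2, ← Finset.sum_filter, Finset.sum_const, smul_eq_mul,
      card_containing v i n (by omega) hin hcard, mul_comm]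
  refine ⟨part1, ?_⟩
  -- rational part
  have hn : 4 ≤ n := le_trans hi hin
  rw [← Finset.sum_div, ← Nat.cast_sum, part1]
  have hkey : ((n - 2) + 1) * (n - 2).choose (i - 2) = (n - 1).choose (i - 1) * ((i - 2) + 1) := by
    have h1 : n - 1 = (n - 2) + 1 := by omega
    have h2 : i - 1 = (i - 2) + 1 := by omega
    rw [h1, h2]
    exact Nat.add_one_mul_choose_eq (n - 2) (i - 2)
  have hkeyQ : ((n : ℚ) - 1) * ((n - 2).choose (i - 2) : ℚ)
      = ((i : ℚ) - 1) * ((n - 1).choose (i - 1) : ℚ) := by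
    have h := congrArg (Nat.cast : ℕ → ℚ) hkey
    push_cast [Nat.cast_sub (show 2 ≤ n by omega), Nat.cast_sub (show 2 ≤ i by omega)] at h
    linear_combination h
  have hIpos : (0 : ℚ) < (i : ℚ) := by exact_mod_cast (show 0 < i by omega)
  have hI1 : (1 : ℚ) < (i : ℚ) := by exact_mod_cast (show 1 < i by omega)
  have hC2pos : (0 : ℚ) < ((n - 2).choose (i - 2) : ℚ) := by
    exact_mod_cast Nat.choose_pos (show i - 2 ≤ n - 2 by omega)
  have hden : ((i : ℚ) * ((i : ℚ) - 1) / 2) * ((n - 2).choose (i - 2) : ℚ) ≠ 0 :=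
    (mul_pos (div_pos (mul_pos hIpos (by linarith)) two_pos) hC2pos).ne'
  push_cast [Nat.cast_sub (show 1 ≤ i by omega)]
  rw [div_eq_div_iff hden hIpos.ne']
  linear_combination (-(i : ℚ)) * ((i : ℚ) - 1) * hkeyQ
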